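/- Let (X, 𝓛) be a locally small space. Call a set V ⊆ X small open (in the induced generalized topological space) if V ∈ 𝓛° and every admissible open family 𝓤 is essentially finite on V, i.e., there is a finite subfamily 𝓤_f ⊆ 𝓤 with (⋃𝓤) ∩ V = (⋃𝓤_f) ∩ V. Then the family of small open sets equals 𝓛. -/

import Mathlib

open Set

/-- The family of sets compatible with a family `L`:
`L° = {Y : ∀ M ∈ L, Y ∩ M ∈ L}`. -/
def compatible {X : Type*} (L : Set (Set X)) : Set (Set X) :=
  {Y | ∀ M ∈ L, Y ∩ M ∈ L}

/-- The small sets: `Lˢ = {B : ∃ M ∈ L, B ⊆ M}`. -/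
def smalls {X : Type*} (L : Set (Set X)) : Set (Set X) :=
  {B | ∃ M ∈ L, B ⊆ M}

/-- The weakly open sets: `L^wo = {⋃₀ U : U ⊆ L}`. -/
def weaklyOpens {X : Type*} (L : Set (Set X)) : Set (Set X) :=
  {W | ∃ U ⊆ L, W = ⋃₀ U}

/-- `(X, L)` is a locally small space: `∅ ∈ L`, `L` is closed under binary
intersections and unions, and `L` covers `X`. -/
def IsLSS {X : Type*} (L : Set (Set X)) : Prop :=
  ∅ ∈ L ∧ (∀ a ∈ L, ∀ b ∈ L, a ∩ b ∈ L ∧ a ∪ b ∈ L) ∧ ⋃₀ L = Set.univ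

/-- An admissible (locally essentially finite) open family. -/
def Admissible {X : Type*} (L U : Set (Set X)) : Prop :=
  U ⊆ compatible L ∧
    ∀ M ∈ L, ∃ F ⊆ U, F.Finite ∧ (⋃₀ U) ∩ M = (⋃₀ F) ∩ M

theorem smallOpens_eq_smops {X : Type*} (L : Set (Set X)) (h : IsLSS L) :
    {V | V ∈ compatible L ∧ ∀ U : Set (Set X), Admissible L U →
       ∃ F ⊆ U, F.Finite ∧ (⋃₀ U) ∩ V = (⋃₀ F) ∩ V} = L := by
  obtain ⟨hempty, hclosed, hcover⟩ := h
  have hfin : ∀ F : Set (Set X), F.Finite → F ⊆ L → ⋃₀ F ∈ L := by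
    intro F hF
    refine Set.Finite.induction_on (motive := fun s _ => s ⊆ L → ⋃₀ s ∈ L) F hF (fun _ => by simpa using hempty) ?_
    intro a s _ _ ih hsub
    rw [Set.sUnion_insert]
    exact (hclosed _ (hsub (Set.mem_insert _ _)) _
      (ih fun x hx => hsub (Set.mem_insert_of_mem _ hx))).2
  ext V
  simp only [Set.mem_setOf_eq]
  constructor
  · rintro ⟨hcomp, hU⟩
    have hadm : Admissible L L := by
      refine ⟨fun M hM N hN => (hclosed M hM N hN).1, fun M hM => ?_⟩
      exact ⟨{M}, Set.singleton_subset_iff.mpr hM, Set.finite_singleton M, by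
        rw [hcover, Set.sUnion_singleton, Set.univ_inter, Set.inter_eq_right.mpr le_rfl]⟩
    obtain ⟨F, hFL, hFfin, hFeq⟩ := hU L hadm
    have hV : V = ⋃₀ F ∩ V := by
      rw [← hFeq, hcover, Set.univ_inter]
    rw [Set.inter_comm] at hV
    rw [hV]
    exact hcomp _ (hfin F hFfin hFL)
  · intro hV
    refine ⟨fun M hM => (hclosed V hV M hM).1, fun U ⟨hUc, hUa⟩ => hUa V hV⟩
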